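/- Let K be a number field, let f : P^1 → P^1 be a rational map of degree d ≥ 2 defined over K, and let α ∈ P^1(K). If α is a post-critical point of f, then dim_upper(G_{f,α}) < 1. More precisely, if m ≥ 1 is a positive integer for which f^{−m}(α) contains a critical point of f, then dim_upper(G_{f,α}) ≤ 1 − d^{−m}. -/

import Mathlib

open scoped Classical

noncomputable section

/-! ### Minkowski dimension machinery for groups of automorphisms of rooted trees

A rooted tree is presented by its levels `V 0, V 1, V 2, …` (with `V 0` the root level)
together with parent maps `V (n+1) → V n`.  An automorphism is a family of permutations
of the levels commuting with the parent maps; it is in particular determined by a point of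
`∀ k, Equiv.Perm (V k)`.  The restriction `r_n σ` of `σ` to the height-`n` subtree is the
tuple `(σ 0, …, σ n)`, and the natural metric is
`d(σ,τ) = inf { d!^{-(dⁿ-1)/(d-1)} : r_n σ = r_n τ }`. -/

/-- The exponent `(dⁿ - 1)/(d - 1) = 1 + d + ⋯ + d^(n-1)`. -/
def scaleExp (d n : ℕ) : ℕ := ∑ i ∈ Finset.range n, d ^ i

/-- The scale `ε_n = d!^{-(dⁿ-1)/(d-1)}`, i.e. `1/|Aut(Tₙᶜᵒᵐ)|`. -/
def treeScale (d n : ℕ) : ℝ := ((d.factorial : ℝ) ^ scaleExp d n)⁻¹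

/-- Two families of level permutations restrict to the same automorphism of the
height-`n` subtree. -/
def AgreeUpTo {V : ℕ → Type*} (n : ℕ) (σ τ : ∀ k, Equiv.Perm (V k)) : Prop :=
  ∀ k, k ≤ n → σ k = τ k

/-- The natural metric on automorphisms of a rooted `d`-ary tree:
`d(σ,τ) = inf { d!^{-(dⁿ-1)/(d-1)} : σ and τ agree on the height-n subtree }`. -/
def treeDist {V : ℕ → Type*} (d : ℕ) (σ τ : ∀ k, Equiv.Perm (V k)) : ℝ :=
  sInf {x : ℝ | ∃ n : ℕ, AgreeUpTo n σ τ ∧ x = treeScale d n}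

/-- `N_{ε_n}(G)`: the least number of balls of radius `ε_n = treeScale d n` needed to
cover `G`. -/
def coverNum {V : ℕ → Type*} (d : ℕ) (G : Set (∀ k, Equiv.Perm (V k))) (n : ℕ) : ℕ :=
  sInf {m : ℕ | ∃ s : Finset (∀ k, Equiv.Perm (V k)), s.card = m ∧
    G ⊆ ⋃ σ ∈ s, {τ | treeDist d σ τ ≤ treeScale d n}}

/-- The lower Minkowski dimension `liminf_{ε → 0} log N_ε(G) / log (1/ε)` (computed
along the scales `ε_n` of the metric). -/
def dimLower {V : ℕ → Type*} (d : ℕ) (G : Set (∀ k, Equiv.Perm (V k))) : ℝ :=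
  Filter.liminf
    (fun n : ℕ => Real.log (coverNum d G n : ℝ) / Real.log (1 / treeScale d n)) Filter.atTop

/-- The upper Minkowski dimension `limsup_{ε → 0} log N_ε(G) / log (1/ε)` (computed
along the scales `ε_n` of the metric). -/
def dimUpper {V : ℕ → Type*} (d : ℕ) (G : Set (∀ k, Equiv.Perm (V k))) : ℝ :=
  Filter.limsup
    (fun n : ℕ => Real.log (coverNum d G n : ℝ) / Real.log (1 / treeScale d n)) Filter.atTop

/-- The Minkowski dimension of `G` exists and equals `x`. -/
def HasDim {V : ℕ → Type*} (d : ℕ) (G : Set (∀ k, Equiv.Perm (V k))) (x : ℝ) : Prop :=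
  dimLower d G = x ∧ dimUpper d G = x

/-- `G` is closed for the natural metric. -/
def IsDistClosed {V : ℕ → Type*} (d : ℕ) (G : Set (∀ k, Equiv.Perm (V k))) : Prop :=
  ∀ σ, (∀ ε : ℝ, 0 < ε → ∃ τ ∈ G, treeDist d σ τ ≤ ε) → σ ∈ G

/-- The closure of `G` for the natural metric. -/
def distClosure {V : ℕ → Type*} (d : ℕ) (G : Set (∀ k, Equiv.Perm (V k))) :
    Set (∀ k, Equiv.Perm (V k)) :=
  {σ | ∀ ε : ℝ, 0 < ε → ∃ τ ∈ G, treeDist d σ τ ≤ ε}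

/-- `|r_n(G)|`: the cardinality of the restriction of `G` to the height-`n` subtree. -/
def levelCard {V : ℕ → Type*} (G : Set (∀ k, Equiv.Perm (V k))) (n : ℕ) : ℕ :=
  Nat.card ((fun (σ : ∀ k, Equiv.Perm (V k)) (k : Fin (n + 1)) => σ k.1) '' G)

end
noncomputable section

/-- A fixed algebraic closure `K̄` of `K`. -/
abbrev Kbar (K : Type*) [Field K] : Type _ := AlgebraicClosure K

/-- The level-`n` vertices of the preimage tree of `α` under `φ`: the set
`φ^{-n}(α)`. -/
abbrev preV {Pts : Type*} (φ : Pts → Pts) (α : Pts) (n : ℕ) : Type _ :=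
  {β : Pts // φ^[n] β = α}

/-- The parent map of the preimage tree: a vertex `β ∈ φ^{-(n+1)}(α)` is joined to
`φ(β) ∈ φ^{-n}(α)`. -/
def preParent {Pts : Type*} (φ : Pts → Pts) (α : Pts) (n : ℕ)
    (β : preV φ α (n + 1)) : preV φ α n :=
  ⟨φ β.1, by have h := β.2; rwa [Function.iterate_succ_apply] at h⟩

/-- The image `G_{φ,α}` of the arboreal Galois representation attached to `(φ, α)` over
the base field `L` (an intermediate field of `K̄/K`): the set of families of level
permutations of the preimage tree induced by elements of `Gal(K̄/L)`, acting on points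
via `act`. -/
def arbGal {K : Type*} [Field K] {Pts : Type*}
    (act : (Kbar K ≃ₐ[K] Kbar K) → Pts → Pts) (L : IntermediateField K (Kbar K))
    (φ : Pts → Pts) (α : Pts) : Set (∀ n, Equiv.Perm (preV φ α n)) :=
  {g | ∃ σ : Kbar K ≃ₐ[K] Kbar K, (∀ x ∈ L, σ x = x) ∧
    ∀ (n : ℕ) (β : preV φ α n), (g n β : Pts) = act σ (β : Pts)}

end
noncomputable section

/-- The projective line `ℙ¹(L) = L ∪ {∞}`, with `none` the point at infinity. -/
abbrev P1 (L : Type*) := Option L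

/-- The action on `ℙ¹(A)` of the rational map `f = p/q` with coefficients in `K`,
for an extension field `A` of `K`.  At a finite point `x` the value is `p(x)/q(x)`
(`∞` when `q(x) = 0`), and the value at `∞` is governed by the degrees of `p` and
`q` and their leading coefficients. -/
def ratAct {K : Type*} [Field K] (p q : Polynomial K)
    (A : Type*) [Field A] [Algebra K A] : P1 A → P1 A
  | some x =>
      if Polynomial.aeval x q = 0 then none
      else some (Polynomial.aeval x p / Polynomial.aeval x q)
  | none =>
      if q.natDegree < p.natDegree then none
      else if p.natDegree < q.natDegree then some 0
      else some (algebraMap K A (p.leadingCoeff / q.leadingCoeff))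

/-- The natural action of `Gal(K̄/K)` on `ℙ¹(K̄)`. -/
def galP1 {K : Type*} [Field K] (σ : Kbar K ≃ₐ[K] Kbar K) : P1 (Kbar K) → P1 (Kbar K) :=
  Option.map σ

/-- The inclusion `ℙ¹(K) ⊆ ℙ¹(K̄)`. -/
def P1K {K : Type*} [Field K] : P1 K → P1 (Kbar K) :=
  Option.map (algebraMap K (Kbar K))

/-- The set of `L`-rational points of `ℙ¹(K̄)`, for an intermediate field `L` of
`K̄/K`. -/
def P1Rat {K : Type*} [Field K] (L : IntermediateField K (Kbar K)) : Set (P1 (Kbar K)) :=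
  {β | β = none ∨ ∃ x ∈ L, β = some x}

/-- The Möbius transformation of `ℙ¹(F)` attached to `(a b; c e) ∈ PGL₂(F)`. -/
def moebius {F : Type*} [Field F] (a b c e : F) : P1 F → P1 F
  | some x => if c * x + e = 0 then none else some ((a * x + b) / (c * x + e))
  | none => if c = 0 then none else some (a / c)

/-- The normalizing constant `C_D = log(D!)/(D-1)`. -/
def Cconst (D : ℕ) : ℝ := Real.log (D.factorial : ℝ) / ((D : ℝ) - 1)

/-- The ramification multiplicity at a point `γ ∈ ℙ¹(A)` of the degree-`d` rational
map `f = p/q` with coefficients in `K ⊆ A`:  at a finite point `γ` with `f(γ) = c`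
finite it is the order of vanishing of `p - c·q` at `γ`; the cases involving `∞` are
handled using `q` and degrees.  A point is critical when this is at least `2`. -/
def multAt {K : Type*} [Field K] (p q : Polynomial K)
    (A : Type*) [Field A] [Algebra K A] (d : ℕ) : P1 A → ℕ
  | some x =>
      match ratAct p q A (some x) with
      | some c => ((p.map (algebraMap K A)) -
          Polynomial.C c * (q.map (algebraMap K A))).rootMultiplicity x
      | none => (q.map (algebraMap K A)).rootMultiplicity x
  | none =>
      match ratAct p q A none with
      | some c => d - ((p.map (algebraMap K A)) -
          Polynomial.C c * (q.map (algebraMap K A))).natDegree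
      | none => d - q.natDegree

end

namespace AuxAPN

lemma fact_le_pow_pred : ∀ c : ℕ, c.factorial ≤ c ^ (c - 1)
  | 0 => le_refl 1
  | 1 => le_refl 1
  | (c+2) => by
      have ih := fact_le_pow_pred (c+1)
      calc (c+2).factorial = (c+2) * (c+1).factorial := rfl
        _ ≤ (c+2) * (c+1)^c := Nat.mul_le_mul_left _ ih
        _ ≤ (c+2) * (c+2)^c := by
            exact Nat.mul_le_mul_left _ (Nat.pow_le_pow_left (by omega) c)
        _ = (c+2)^(c+1) := by ring

lemma convex_core (c : ℕ) (hc : 1 ≤ c) :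
    ∀ t : ℕ, (c.factorial) ^ (c + t - 1) ≤ ((c + t).factorial) ^ (c - 1)
  | 0 => by simp
  | (t+1) => by
      have ih := convex_core c hc t
      have h1 : c + (t+1) - 1 = (c + t - 1) + 1 := by omega
      rw [h1, pow_succ]
      calc (c.factorial) ^ (c + t - 1) * c.factorial
          ≤ ((c+t).factorial) ^ (c-1) * c ^ (c-1) :=
            Nat.mul_le_mul ih (fact_le_pow_pred c)
        _ ≤ ((c+t).factorial) ^ (c-1) * (c+t+1) ^ (c-1) :=
            Nat.mul_le_mul_left _ (Nat.pow_le_pow_left (by omega) _)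
        _ = ((c+t).factorial * (c+t+1)) ^ (c-1) := (mul_pow _ _ _).symm
        _ = ((c+t+1).factorial) ^ (c-1) := by
            rw [Nat.factorial_succ (c+t)]; ring_nf
  
lemma convex_fact {c d : ℕ} (hc : 1 ≤ c) (hcd : c ≤ d) :
    c.factorial ^ (d - 1) * d.factorial ≤ d.factorial ^ c := by
  obtain ⟨t, rfl⟩ := Nat.exists_eq_add_of_le hcd
  calc c.factorial ^ (c + t - 1) * (c+t).factorial
      ≤ ((c+t).factorial) ^ (c-1) * (c+t).factorial :=
        Nat.mul_le_mul_right _ (convex_core c hc t)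
    _ = (c+t).factorial ^ (c - 1 + 1) := (pow_succ _ _).symm
    _ = (c+t).factorial ^ c := by congr 1; omega

lemma descFactorial_le_factorial (n k : ℕ) : n.descFactorial k ≤ n.factorial := by
  rcases le_or_gt k n with h | h
  · rw [Nat.descFactorial_eq_div h]
    exact Nat.div_le_self _ _
  · rw [Nat.descFactorial_of_lt h]
    exact Nat.zero_le _

lemma treeScale_pos (d n : ℕ) : 0 < treeScale d n := by
  unfold treeScale
  positivity

lemma treeScale_le_one (d n : ℕ) : treeScale d n ≤ 1 := by
  unfold treeScale
  rw [inv_le_one_iff₀]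
  right
  exact one_le_pow₀ (by exact_mod_cast Nat.one_le_iff_ne_zero.mpr (Nat.factorial_pos d).ne')

lemma treeDist_le {V : ℕ → Type*} (d n : ℕ) (σ τ : ∀ k, Equiv.Perm (V k))
    (h : AgreeUpTo n σ τ) : treeDist d σ τ ≤ treeScale d n := by
  apply csInf_le
  · exact ⟨0, by rintro x ⟨k, -, rfl⟩; exact (treeScale_pos d k).le⟩
  · exact ⟨n, h, rfl⟩

end AuxAPN
namespace AuxAPN

section Poly
variable {K : Type*} [Field K] {L : Type*} [Field L] [Algebra K L]

/-- The polynomial whose roots are the finite points of the fiber over `y`. -/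
noncomputable def fibPoly (p q : Polynomial K) (L : Type*) [Field L] [Algebra K L] : P1 L → Polynomial L
  | some c => p.map (algebraMap K L) - Polynomial.C c * q.map (algebraMap K L)
  | none => q.map (algebraMap K L)

lemma aeval_eq (x : L) (r : Polynomial K) :
    Polynomial.aeval x r = (r.map (algebraMap K L)).eval x := by
  rw [Polynomial.aeval_def, Polynomial.eval₂_eq_eval_map]

variable {p q : Polynomial K} {d : ℕ}

lemma deg_facts (hdeg : max p.natDegree q.natDegree = d) :
    p.natDegree ≤ d ∧ q.natDegree ≤ d ∧ (p.natDegree = d ∨ q.natDegree = d) := by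
  rcases le_total p.natDegree q.natDegree with h | h
  · rw [max_eq_right h] at hdeg; exact ⟨by omega, by omega, Or.inr hdeg⟩
  · rw [max_eq_left h] at hdeg; exact ⟨by omega, by omega, Or.inl hdeg⟩

lemma no_common_root (hf : IsCoprime p q) {x : L}
    (hq : (q.map (algebraMap K L)).eval x = 0) :
    (p.map (algebraMap K L)).eval x ≠ 0 := by
  intro hp
  obtain ⟨u, v, huv⟩ := hf.map (Polynomial.mapRingHom (algebraMap K L))
  have h1 := congrArg (Polynomial.eval x) huv
  simp only [Polynomial.coe_mapRingHom, Polynomial.eval_add, Polynomial.eval_mul, hp, hq,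
    mul_zero, add_zero, Polynomial.eval_one] at h1
  exact one_ne_zero h1.symm

lemma q_ne_zero' (hf : IsCoprime p q) (hd : 2 ≤ d)
    (hdeg : max p.natDegree q.natDegree = d) : q ≠ 0 := by
  intro h
  rw [h] at hf
  have h0 := Polynomial.natDegree_eq_zero_of_isUnit (isCoprime_zero_right.mp hf)
  rw [h] at hdeg
  simp [h0] at hdeg
  omega

lemma qm_ne_zero (hf : IsCoprime p q) (hd : 2 ≤ d)
    (hdeg : max p.natDegree q.natDegree = d) : q.map (algebraMap K L) ≠ 0 :=
  Polynomial.map_ne_zero (q_ne_zero' hf hd hdeg)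

lemma natDegree_qm : (q.map (algebraMap K L)).natDegree = q.natDegree :=
  Polynomial.natDegree_map_eq_of_injective (algebraMap K L).injective q

lemma natDegree_pm : (p.map (algebraMap K L)).natDegree = p.natDegree :=
  Polynomial.natDegree_map_eq_of_injective (algebraMap K L).injective p

lemma Pc_ne_zero (hf : IsCoprime p q) (hd : 2 ≤ d)
    (hdeg : max p.natDegree q.natDegree = d) (c : L) :
    p.map (algebraMap K L) - Polynomial.C c * q.map (algebraMap K L) ≠ 0 := by
  intro h
  rw [sub_eq_zero] at h
  have hcop := hf.map (Polynomial.mapRingHom (algebraMap K L))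
  simp only [Polynomial.coe_mapRingHom] at hcop
  rw [h] at hcop
  have hu : IsUnit (q.map (algebraMap K L)) :=
    isCoprime_self.mp hcop.of_mul_left_right
  have hq0 : q.natDegree = 0 := by
    rw [← natDegree_qm (L := L)]; exact Polynomial.natDegree_eq_zero_of_isUnit hu
  have hp0 : p.natDegree = 0 := by
    have := Polynomial.natDegree_C_mul_le c (q.map (algebraMap K L))
    rw [← h, natDegree_pm] at this
    rw [natDegree_qm] at this
    omega
  rw [hp0, hq0] at hdeg
  simp at hdeg
  omega

lemma Pc_natDegree_le (hdeg : max p.natDegree q.natDegree = d) (c : L) :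
    (p.map (algebraMap K L) - Polynomial.C c * q.map (algebraMap K L)).natDegree ≤ d := by
  refine le_trans (Polynomial.natDegree_sub_le _ _) ?_
  refine le_trans (max_le_max (le_of_eq (natDegree_pm (L := L)))
    (le_trans (Polynomial.natDegree_C_mul_le _ _) (le_of_eq (natDegree_qm (L := L))))) ?_
  exact le_of_eq hdeg

lemma natDegree_succ_le_of_coeff_zero {P : Polynomial L} (hP : P ≠ 0)
    (hle : P.natDegree ≤ d) (h0 : P.coeff d = 0) : P.natDegree + 1 ≤ d := by
  have : P.natDegree ≠ d := by
    intro h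
    apply hP
    apply Polynomial.leadingCoeff_eq_zero.mp
    rw [← Polynomial.coeff_natDegree, h]
    exact h0
  omega

lemma fibPoly_ne_zero (hf : IsCoprime p q) (hd : 2 ≤ d)
    (hdeg : max p.natDegree q.natDegree = d) (y : P1 L) : fibPoly p q L y ≠ 0 := by
  cases y with
  | none => exact qm_ne_zero hf hd hdeg
  | some c => exact Pc_ne_zero hf hd hdeg c

lemma fibPoly_natDegree_le (hdeg : max p.natDegree q.natDegree = d) (y : P1 L) :
    (fibPoly p q L y).natDegree ≤ d := by
  cases y with
  | none => rw [fibPoly, natDegree_qm]; omega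
  | some c => exact Pc_natDegree_le hdeg c

lemma fibPoly_natDegree_succ_le (hf : IsCoprime p q) (hd : 2 ≤ d)
    (hdeg : max p.natDegree q.natDegree = d) {y : P1 L}
    (hy : ratAct p q L none = y) : (fibPoly p q L y).natDegree + 1 ≤ d := by
  cases y with
  | none =>
      rw [fibPoly, natDegree_qm]
      obtain ⟨hp1, hq1, -⟩ := deg_facts hdeg
      have : q.natDegree < p.natDegree := by
        simp only [ratAct] at hy
        split_ifs at hy with h1 h2
        · exact h1
      omega
  | some c =>
      simp only [ratAct] at hy
      obtain ⟨hp1, hq1, hmax1⟩ := deg_facts hdeg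
      split_ifs at hy with h1 h2
      · -- p.natDegree < q.natDegree, and c = 0
        have hc : c = 0 := (Option.some_inj.mp hy).symm
        subst hc
        have heq0 : fibPoly p q L (some (0:L)) = p.map (algebraMap K L) := by
          simp [fibPoly]
        rw [heq0, natDegree_pm]
        omega
      · -- degrees equal, c = leading ratio
        have hpq : p.natDegree = q.natDegree := by omega
        have hdq : q.natDegree = d := by omega
        have hc : c = algebraMap K L (p.leadingCoeff / q.leadingCoeff) :=
          (Option.some_inj.mp hy).symm
        apply natDegree_succ_le_of_coeff_zero (fibPoly_ne_zero hf hd hdeg _)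
          (fibPoly_natDegree_le hdeg _)
        have hq0 : q ≠ 0 := q_ne_zero' hf hd hdeg
        have hlq : algebraMap K L q.leadingCoeff ≠ 0 := by
          intro hh
          exact Polynomial.leadingCoeff_ne_zero.mpr hq0
            ((algebraMap K L).injective (hh.trans (map_zero _).symm))
        have hcoeffp : (p.map (algebraMap K L)).coeff d = algebraMap K L p.leadingCoeff := by
          rw [Polynomial.coeff_map]
          congr 1
          rw [← Polynomial.coeff_natDegree (p := p)]
          congr 1
          omega
        have hcoeffq : (q.map (algebraMap K L)).coeff d = algebraMap K L q.leadingCoeff := by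
          rw [Polynomial.coeff_map]
          congr 1
          rw [← Polynomial.coeff_natDegree (p := q)]
          congr 1
          omega
        show (fibPoly p q L (some c)).coeff d = 0
        rw [fibPoly]
        rw [Polynomial.coeff_sub, Polynomial.coeff_C_mul, hcoeffp, hcoeffq, hc, map_div₀]
        rw [div_mul_cancel₀ _ hlq]
        ring

end Poly

end AuxAPN
namespace AuxAPN

section Poly2
variable {K : Type*} [Field K] {L : Type*} [Field L] [Algebra K L]
variable {p q : Polynomial K} {d : ℕ}

lemma eval_of_fiber_some (hf : IsCoprime p q) {a : L} {y : P1 L}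
    (h : ratAct p q L (some a) = y) : (fibPoly p q L y).eval a = 0 := by
  revert h
  simp only [ratAct]
  split_ifs with hq
  · rintro rfl
    rw [fibPoly, ← aeval_eq]
    exact hq
  · rintro rfl
    have hq' : (q.map (algebraMap K L)).eval a ≠ 0 := by rwa [← aeval_eq]
    rw [fibPoly]
    simp only [Polynomial.eval_sub, Polynomial.eval_mul, Polynomial.eval_C]
    rw [aeval_eq, aeval_eq]
    rw [div_mul_cancel₀ _ hq']
    ring

/-- Injection of the fiber over `y` into `Option` of the zero set of `fibPoly`. -/
noncomputable def fibMap (hf : IsCoprime p q) (y : P1 L) :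
    {x : P1 L // ratAct p q L x = y} →
      Option {z : L // (fibPoly p q L y).eval z = 0} :=
  fun x => match x with
  | ⟨none, _⟩ => none
  | ⟨some a, ha⟩ => some ⟨a, eval_of_fiber_some hf ha⟩

lemma fibMap_inj (hf : IsCoprime p q) (y : P1 L) : Function.Injective (fibMap hf y) := by
  rintro ⟨x1, h1⟩ ⟨x2, h2⟩ h
  cases x1 <;> cases x2 <;> simp_all [fibMap]

/-- Sharp injection when `∞` is not in the fiber. -/
noncomputable def fibMap' (hf : IsCoprime p q) {y : P1 L}
    (hnn : ratAct p q L none ≠ y) :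
    {x : P1 L // ratAct p q L x = y} →
      {z : L // (fibPoly p q L y).eval z = 0} :=
  fun x => match x with
  | ⟨none, h⟩ => absurd h hnn
  | ⟨some a, ha⟩ => ⟨a, eval_of_fiber_some hf ha⟩

lemma fibMap'_inj (hf : IsCoprime p q) {y : P1 L} (hnn : ratAct p q L none ≠ y) :
    Function.Injective (fibMap' hf hnn) := by
  rintro ⟨x1, h1⟩ ⟨x2, h2⟩ h
  cases x1 <;> cases x2
  · exact absurd h1 hnn
  · exact absurd h1 hnn
  · exact absurd h2 hnn
  · simp_all [fibMap']

lemma zeros_finite {R : Polynomial L} (hR : R ≠ 0) :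
    Finite {z : L // R.eval z = 0} := by
  have : {z : L | R.eval z = 0}.Finite := Polynomial.finite_setOf_isRoot hR
  exact this.to_subtype

lemma card_zeros_eq {R : Polynomial L} (hR : R ≠ 0) :
    Nat.card {z : L // R.eval z = 0} = R.roots.toFinset.card := by
  have hset : {z : L | R.eval z = 0} = ↑R.roots.toFinset := by
    ext z
    simp [Polynomial.mem_roots, hR, Polynomial.IsRoot]
  calc Nat.card {z : L // R.eval z = 0} = Set.ncard {z : L | R.eval z = 0} :=
        Nat.card_coe_set_eq _
    _ = Set.ncard (↑R.roots.toFinset : Set L) := by rw [hset]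
    _ = R.roots.toFinset.card := Set.ncard_coe_finset _

lemma card_zeros_le {R : Polynomial L} (hR : R ≠ 0) :
    Nat.card {z : L // R.eval z = 0} ≤ R.natDegree := by
  rw [card_zeros_eq hR]
  exact le_trans (Multiset.toFinset_card_le _) (Polynomial.card_roots' R)

lemma card_zeros_crit {R : Polynomial L} (hR : R ≠ 0) {x : L}
    (hx : 2 ≤ R.rootMultiplicity x) :
    Nat.card {z : L // R.eval z = 0} + 1 ≤ R.natDegree := by
  rw [card_zeros_eq hR]
  have hcount : R.roots.count x = R.rootMultiplicity x := Polynomial.count_roots R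
  have hxmem : x ∈ R.roots := Multiset.count_pos.mp (by omega)
  have hle : R.roots.dedup + {x} ≤ R.roots := by
    rw [Multiset.le_iff_count]
    intro a
    rw [Multiset.count_add]
    by_cases ha : a = x
    · subst ha
      rw [Multiset.count_dedup, if_pos hxmem, Multiset.count_singleton_self]
      omega
    · rw [Multiset.count_singleton, if_neg ha, add_zero]
      exact Multiset.count_le_of_le a (Multiset.dedup_le _)
  have h2 := Multiset.card_le_card hle
  rw [Multiset.card_add, Multiset.card_singleton] at h2
  rw [Multiset.card_toFinset]
  exact le_trans h2 (Polynomial.card_roots' R)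

lemma fiber_finite (hf : IsCoprime p q) (hd : 2 ≤ d)
    (hdeg : max p.natDegree q.natDegree = d) (y : P1 L) :
    Finite {x : P1 L // ratAct p q L x = y} := by
  haveI := zeros_finite (fibPoly_ne_zero (L := L) hf hd hdeg y)
  letI := Fintype.ofFinite {z : L // (fibPoly p q L y).eval z = 0}
  exact Finite.of_injective _ (fibMap_inj hf y)

lemma fiber_card_le_succ (hf : IsCoprime p q) (hd : 2 ≤ d)
    (hdeg : max p.natDegree q.natDegree = d) (y : P1 L) :
    Nat.card {x : P1 L // ratAct p q L x = y} ≤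
      Nat.card {z : L // (fibPoly p q L y).eval z = 0} + 1 := by
  haveI hfin := zeros_finite (fibPoly_ne_zero (L := L) hf hd hdeg y)
  letI := Fintype.ofFinite {z : L // (fibPoly p q L y).eval z = 0}
  have h1 := Nat.card_le_card_of_injective _ (fibMap_inj (L := L) hf y)
  have h2 : Nat.card (Option {z : L // (fibPoly p q L y).eval z = 0}) =
      Nat.card {z : L // (fibPoly p q L y).eval z = 0} + 1 := by
    rw [Nat.card_eq_fintype_card, Nat.card_eq_fintype_card, Fintype.card_option]
  rw [h2] at h1
  exact h1

lemma fiber_card_le_sharp (hf : IsCoprime p q) (hd : 2 ≤ d)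
    (hdeg : max p.natDegree q.natDegree = d) {y : P1 L}
    (hnn : ratAct p q L none ≠ y) :
    Nat.card {x : P1 L // ratAct p q L x = y} ≤
      Nat.card {z : L // (fibPoly p q L y).eval z = 0} := by
  haveI := zeros_finite (fibPoly_ne_zero (L := L) hf hd hdeg y)
  exact Nat.card_le_card_of_injective _ (fibMap'_inj hf hnn)

lemma fiber_card_le (hf : IsCoprime p q) (hd : 2 ≤ d)
    (hdeg : max p.natDegree q.natDegree = d) (y : P1 L) :
    Nat.card {x : P1 L // ratAct p q L x = y} ≤ d := by
  have hz := card_zeros_le (fibPoly_ne_zero (L := L) hf hd hdeg y)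
  by_cases hnn : ratAct p q L none = y
  · have h1 := fiber_card_le_succ hf hd hdeg y
    have h2 := fibPoly_natDegree_succ_le hf hd hdeg hnn
    omega
  · have h1 := fiber_card_le_sharp hf hd hdeg hnn
    have h2 := fibPoly_natDegree_le (L := L) hdeg y
    omega

end Poly2
end AuxAPN
namespace AuxAPN

section Poly3
variable {K : Type*} [Field K] {L : Type*} [Field L] [Algebra K L]
variable {p q : Polynomial K} {d : ℕ}

lemma fiber_nonempty [IsAlgClosed L] (hf : IsCoprime p q) (hd : 2 ≤ d)
    (hdeg : max p.natDegree q.natDegree = d) (y : P1 L) :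
    Nonempty {x : P1 L // ratAct p q L x = y} := by
  obtain ⟨hp1, hq1, hmax1⟩ := deg_facts hdeg
  by_cases hdeg1 : 1 ≤ (fibPoly p q L y).natDegree
  · -- a finite point in the fiber
    obtain ⟨z, hz⟩ := IsAlgClosed.exists_root (fibPoly p q L y) (by
      have : (0 : WithBot ℕ) < (fibPoly p q L y).degree :=
        Polynomial.natDegree_pos_iff_degree_pos.mp (by omega)
      exact ne_of_gt this)
    have hz' : (fibPoly p q L y).eval z = 0 := hz
    cases y with
    | none =>
        refine ⟨some z, ?_⟩
        rw [fibPoly] at hz'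
        simp only [ratAct, aeval_eq]
        rw [if_pos hz']
    | some c =>
        have hqz : (q.map (algebraMap K L)).eval z ≠ 0 := by
          intro hq0
          apply no_common_root hf hq0
          rw [fibPoly] at hz'
          simp only [Polynomial.eval_sub, Polynomial.eval_mul, Polynomial.eval_C] at hz'
          rw [hq0, mul_zero, sub_zero] at hz'
          exact hz'
        refine ⟨some z, ?_⟩
        simp only [ratAct, aeval_eq]
        rw [if_neg hqz]
        congr 1
        rw [fibPoly] at hz'
        simp only [Polynomial.eval_sub, Polynomial.eval_mul, Polynomial.eval_C] at hz'
        rw [div_eq_iff hqz]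
        linear_combination hz'
  · -- the fiber contains ∞
    refine ⟨none, ?_⟩
    cases y with
    | none =>
        have hq0 : q.natDegree = 0 := by
          have := natDegree_qm (L := L) (q := q)
          rw [fibPoly] at hdeg1
          omega
        simp only [ratAct]
        rw [if_pos (by omega)]
    | some c =>
        have hcoeff : (fibPoly p q L (some c)).coeff d = 0 :=
          Polynomial.coeff_eq_zero_of_natDegree_lt (by omega)
        rw [fibPoly, Polynomial.coeff_sub, Polynomial.coeff_C_mul,
          Polynomial.coeff_map, Polynomial.coeff_map] at hcoeff
        by_cases hcase : q.natDegree < p.natDegree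
        · exfalso
          have hpd : p.natDegree = d := by omega
          have hp0 : p ≠ 0 := by
            intro h; rw [h] at hpd; simp at hpd; omega
          have h1 : p.coeff d = p.leadingCoeff := by rw [← hpd]; exact Polynomial.coeff_natDegree
          have h2 : q.coeff d = 0 := Polynomial.coeff_eq_zero_of_natDegree_lt (by omega)
          rw [h1, h2, map_zero, mul_zero] at hcoeff
          rw [sub_zero] at hcoeff
          exact Polynomial.leadingCoeff_ne_zero.mpr hp0
            ((algebraMap K L).injective (hcoeff.trans (map_zero _).symm))
        · have hdq : q.natDegree = d := by omega
          have hq0 : q ≠ 0 := by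
            intro h; rw [h] at hdq; simp at hdq; omega
          have h2 : q.coeff d = q.leadingCoeff := by rw [← hdq]; exact Polynomial.coeff_natDegree
          have hlq : algebraMap K L q.leadingCoeff ≠ 0 := fun hh =>
            Polynomial.leadingCoeff_ne_zero.mpr hq0
              ((algebraMap K L).injective (hh.trans (map_zero _).symm))
          simp only [ratAct]
          rw [if_neg hcase]
          by_cases h3 : p.natDegree < q.natDegree
          · rw [if_pos h3]
            have h1 : p.coeff d = 0 := Polynomial.coeff_eq_zero_of_natDegree_lt (by omega)
            rw [h1, h2, map_zero, zero_sub, neg_eq_zero] at hcoeff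
            have hc0 : c = 0 := by
              rcases mul_eq_zero.mp hcoeff with h | h
              · exact h
              · exact absurd h hlq
            rw [hc0]
          · rw [if_neg h3]
            have hpd : p.natDegree = d := by omega
            have h1 : p.coeff d = p.leadingCoeff := by
              rw [← hpd]; exact Polynomial.coeff_natDegree
            rw [h1, h2, sub_eq_zero] at hcoeff
            congr 1
            rw [map_div₀, div_eq_iff hlq]
            exact hcoeff

lemma fiber_card_crit (hf : IsCoprime p q) (hd : 2 ≤ d)
    (hdeg : max p.natDegree q.natDegree = d) {γ : P1 L}
    (hγ : 2 ≤ multAt p q L d γ) :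
    Nat.card {x : P1 L // ratAct p q L x = ratAct p q L γ} + 1 ≤ d := by
  obtain ⟨hp1, hq1, hmax1⟩ := deg_facts hdeg
  cases γ with
  | none =>
      rcases hy : ratAct p q L none with _ | c
      · -- image is ∞ : multiplicity is d - deg q
        simp only [multAt, hy] at hγ
        have hb1 := fiber_card_le_succ hf hd hdeg (none : P1 L)
        have hb2 := card_zeros_le (fibPoly_ne_zero (L := L) hf hd hdeg (none : P1 L))
        have hb3 : (fibPoly p q L (none : P1 L)).natDegree = q.natDegree := by
          rw [fibPoly, natDegree_qm]
        omega
      · simp only [multAt, hy] at hγ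
        have hb1 := fiber_card_le_succ hf hd hdeg (some c)
        have hb2 := card_zeros_le (fibPoly_ne_zero (L := L) hf hd hdeg (some c))
        have hb3 : (fibPoly p q L (some c)).natDegree =
            ((p.map (algebraMap K L)) -
              Polynomial.C c * (q.map (algebraMap K L))).natDegree := rfl
        omega
  | some x =>
      rcases hy : ratAct p q L (some x) with _ | c
      · simp only [multAt, hy] at hγ
        have hcrit := card_zeros_crit (qm_ne_zero (L := L) hf hd hdeg) hγ
        have hb3 : (fibPoly p q L (none : P1 L)) = q.map (algebraMap K L) := rfl
        by_cases hnn : ratAct p q L none = (none : P1 L)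
        · have hlt : q.natDegree < p.natDegree := by
            simp only [ratAct] at hnn
            split_ifs at hnn with h1 h2
            · exact h1
          have hb1 := fiber_card_le_succ hf hd hdeg (none : P1 L)
          rw [hb3] at hb1
          rw [natDegree_qm] at hcrit
          omega
        · have hb1 := fiber_card_le_sharp hf hd hdeg hnn
          rw [hb3] at hb1
          rw [natDegree_qm] at hcrit
          omega
      · simp only [multAt, hy] at hγ
        have hPne := Pc_ne_zero (L := L) hf hd hdeg c
        have hcrit := card_zeros_crit hPne hγ
        have hb3 : (fibPoly p q L (some c)) = (p.map (algebraMap K L)) -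
            Polynomial.C c * (q.map (algebraMap K L)) := rfl
        have hdegle := Pc_natDegree_le (L := L) hdeg c
        by_cases hnn : ratAct p q L none = some c
        · have hb1 := fiber_card_le_succ hf hd hdeg (some c)
          have hb2 := fibPoly_natDegree_succ_le hf hd hdeg hnn
          rw [hb3] at hb1 hb2
          omega
        · have hb1 := fiber_card_le_sharp hf hd hdeg hnn
          rw [hb3] at hb1
          omega

end Poly3
end AuxAPN
namespace AuxAPN

section Tree
variable {A : Type*} (φ : A → A) (root : A) {d : ℕ}

lemma preV_zero_subsingleton : Subsingleton (preV φ root 0) := by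
  constructor
  rintro ⟨a, ha⟩ ⟨b, hb⟩
  rw [Function.iterate_zero_apply] at ha hb
  exact Subtype.ext (ha.trans hb.symm)

/-- The fiber of the parent map over `v` is the fiber of `φ` over `v.1`. -/
def fEquiv (n : ℕ) (v : preV φ root n) :
    {β : preV φ root (n+1) // preParent φ root n β = v} ≃ {x : A // φ x = v.1} where
  toFun β := ⟨β.1.1, congrArg Subtype.val β.2⟩
  invFun x := ⟨⟨x.1, by rw [Function.iterate_succ_apply, x.2, v.2]⟩, Subtype.ext x.2⟩
  left_inv β := Subtype.ext (Subtype.ext rfl)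
  right_inv x := rfl

/-- Level `n+1` of the tree decomposes as a disjoint union of `φ`-fibers. -/
def levelEquiv (n : ℕ) :
    preV φ root (n+1) ≃ Σ v : preV φ root n, {x : A // φ x = v.1} :=
  ((Equiv.sigmaFiberEquiv (preParent φ root n)).symm).trans
    (Equiv.sigmaCongrRight (fEquiv φ root n))

lemma preV_finite (hFin : ∀ y : A, Finite {x : A // φ x = y}) :
    ∀ n, Finite (preV φ root n)
  | 0 => @Finite.of_subsingleton _ (preV_zero_subsingleton φ root)
  | (n+1) => by
      haveI := preV_finite hFin n
      haveI : ∀ v : preV φ root n, Finite {x : A // φ x = v.1} := fun v => hFin v.1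
      exact Finite.of_equiv _ (levelEquiv φ root n).symm

lemma preV_nonempty (hNe : ∀ y : A, Nonempty {x : A // φ x = y}) :
    ∀ n, Nonempty (preV φ root n)
  | 0 => ⟨⟨root, rfl⟩⟩
  | (n+1) => by
      obtain ⟨v⟩ := preV_nonempty hNe n
      obtain ⟨x⟩ := hNe v.1
      exact ⟨(levelEquiv φ root n).symm ⟨v, x⟩⟩

lemma card_level_succ (n : ℕ) [Fintype (preV φ root n)]
    [∀ v : preV φ root n, Fintype {x : A // φ x = v.1}] :
    Nat.card (preV φ root (n+1)) = ∑ v : preV φ root n, Nat.card {x : A // φ x = v.1} := by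
  rw [Nat.card_congr (levelEquiv φ root n), Nat.card_eq_fintype_card, Fintype.card_sigma]
  exact Finset.sum_congr rfl fun v _ => (Nat.card_eq_fintype_card).symm

lemma card_succ_le (hFin : ∀ y : A, Finite {x : A // φ x = y}) (hCard : ∀ y : A, Nat.card {x : A // φ x = y} ≤ d) (n : ℕ) :
    Nat.card (preV φ root (n+1)) ≤ d * Nat.card (preV φ root n) := by
  haveI := preV_finite φ root hFin n
  letI := Fintype.ofFinite (preV φ root n)
  haveI : ∀ v : preV φ root n, Finite {x : A // φ x = v.1} := fun v => hFin v.1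
  letI : ∀ v : preV φ root n, Fintype {x : A // φ x = v.1} := fun v => Fintype.ofFinite _
  rw [card_level_succ φ root n]
  calc ∑ v : preV φ root n, Nat.card {x : A // φ x = v.1}
      ≤ ∑ _v : preV φ root n, d := Finset.sum_le_sum fun v _ => hCard v.1
    _ = Fintype.card (preV φ root n) * d := by
        rw [Finset.sum_const, smul_eq_mul, Finset.card_univ]
    _ = d * Nat.card (preV φ root n) := by rw [Nat.card_eq_fintype_card]; ring

lemma card_le_card_succ (hFin : ∀ y : A, Finite {x : A // φ x = y}) (hNe : ∀ y : A, Nonempty {x : A // φ x = y}) (n : ℕ) :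
    Nat.card (preV φ root n) ≤ Nat.card (preV φ root (n+1)) := by
  haveI := preV_finite φ root hFin n
  letI := Fintype.ofFinite (preV φ root n)
  haveI : ∀ v : preV φ root n, Finite {x : A // φ x = v.1} := fun v => hFin v.1
  letI : ∀ v : preV φ root n, Fintype {x : A // φ x = v.1} := fun v => Fintype.ofFinite _
  rw [card_level_succ φ root n]
  calc Nat.card (preV φ root n) = Fintype.card (preV φ root n) := Nat.card_eq_fintype_card
    _ = ∑ _v : preV φ root n, 1 := by rw [Finset.sum_const, smul_eq_mul, mul_one,
        Finset.card_univ]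
    _ ≤ ∑ v : preV φ root n, Nat.card {x : A // φ x = v.1} :=
        Finset.sum_le_sum fun v _ => by
          haveI : Nonempty {x : A // φ x = v.1} := hNe v.1
          exact Nat.card_pos

lemma card_succ_crit (hFin : ∀ y : A, Finite {x : A // φ x = y}) (hCard : ∀ y : A, Nat.card {x : A // φ x = y} ≤ d) (n : ℕ)
    (v₀ : preV φ root n) (hv : Nat.card {x : A // φ x = v₀.1} + 1 ≤ d) :
    Nat.card (preV φ root (n+1)) + 1 ≤ d * Nat.card (preV φ root n) := by
  haveI := preV_finite φ root hFin n
  letI := Fintype.ofFinite (preV φ root n)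
  haveI : ∀ v : preV φ root n, Finite {x : A // φ x = v.1} := fun v => hFin v.1
  letI : ∀ v : preV φ root n, Fintype {x : A // φ x = v.1} := fun v => Fintype.ofFinite _
  rw [card_level_succ φ root n]
  set N := Fintype.card (preV φ root n) with hN
  have hN1 : 1 ≤ N := Fintype.card_pos_iff.mpr ⟨v₀⟩
  have hsplit := Finset.add_sum_erase Finset.univ
    (fun v : preV φ root n => Nat.card {x : A // φ x = v.1}) (Finset.mem_univ v₀)
  have herase : ∑ v ∈ Finset.univ.erase v₀, Nat.card {x : A // φ x = v.1}
      ≤ (N - 1) * d := by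
    have := Finset.sum_le_card_nsmul (Finset.univ.erase v₀)
      (fun v : preV φ root n => Nat.card {x : A // φ x = v.1}) d
      (fun v _ => hCard v.1)
    rwa [Finset.card_erase_of_mem (Finset.mem_univ v₀), Finset.card_univ, smul_eq_mul] at this
  have hsplit' : Nat.card {x : A // φ x = v₀.1} +
      ∑ v ∈ Finset.univ.erase v₀, Nat.card {x : A // φ x = v.1} =
      ∑ v : preV φ root n, Nat.card {x : A // φ x = v.1} := by
    simpa using hsplit
  have h2 : d + (N - 1) * d = d * N := by
    obtain ⟨M, hM⟩ := Nat.exists_eq_add_of_le hN1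
    rw [hM, Nat.add_sub_cancel_left]
    ring
  rw [Nat.card_eq_fintype_card, ← hN]
  omega

lemma card_le_of_fiber_le {α β : Type*} [Finite α] [Finite β] (f : α → β) (E : ℕ)
    (h : ∀ b : β, Nat.card {a : α // f a = b} ≤ E) : Nat.card α ≤ E * Nat.card β := by
  letI := Fintype.ofFinite α
  letI := Fintype.ofFinite β
  rw [Nat.card_eq_fintype_card, Nat.card_eq_fintype_card]
  have hmain := Finset.card_le_mul_card_image (f := f) Finset.univ E ?_
  · calc Fintype.card α = Finset.univ.card := Finset.card_univ.symm
      _ ≤ E * (Finset.univ.image f).card := hmain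
      _ ≤ E * Finset.univ.card := Nat.mul_le_mul_left E
          (Finset.card_le_card (Finset.subset_univ _))
      _ = E * Fintype.card β := by rw [Finset.card_univ]
  · intro b _
    have h1 : (Finset.filter (fun a => f a = b) Finset.univ).card =
        Fintype.card {a : α // f a = b} := (Fintype.card_subtype _).symm
    rw [h1, ← Nat.card_eq_fintype_card]
    exact h b

end Tree
end AuxAPN
namespace AuxAPN

/-- Restriction of a tree automorphism to the height-`n` subtree. -/
def resMapG {V : ℕ → Type*} (n : ℕ) (σ : ∀ k, Equiv.Perm (V k)) :
    ∀ k : Fin (n+1), Equiv.Perm (V k.1) := fun k => σ k.1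

/-- Truncation of a height-`(n+1)` restriction to height `n`. -/
def truncG {V : ℕ → Type*} (n : ℕ) (r : ∀ k : Fin (n+2), Equiv.Perm (V k.1)) :
    ∀ k : Fin (n+1), Equiv.Perm (V k.1) := fun k => r ⟨k.1, by omega⟩

lemma truncG_mem {V : ℕ → Type*} {G : Set (∀ k, Equiv.Perm (V k))} {n : ℕ}
    {r : ∀ k : Fin (n+2), Equiv.Perm (V k.1)}
    (hr : r ∈ resMapG (n+1) '' G) : truncG n r ∈ resMapG n '' G := by
  obtain ⟨g, hg, rfl⟩ := hr
  exact ⟨g, hg, rfl⟩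

lemma res_recover {V : ℕ → Type*} {n : ℕ}
    {r r' : ∀ k : Fin (n+2), Equiv.Perm (V k.1)}
    (h1 : truncG n r = truncG n r')
    (h2 : ∀ β : V (n+1), r ⟨n+1, by omega⟩ β = r' ⟨n+1, by omega⟩ β) : r = r' := by
  funext k
  rcases k with ⟨kv, hkv⟩
  rcases Nat.lt_or_ge kv (n+1) with hk | hk
  · exact congrFun h1 ⟨kv, hk⟩
  · have hkeq : kv = n+1 := by omega
    subst hkeq
    exact Equiv.ext h2

section Gal
variable {K : Type*} [Field K] (p q : Polynomial K)

lemma galP1_ratAct (σ : Kbar K ≃ₐ[K] Kbar K) (x : P1 (Kbar K)) :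
    galP1 σ (ratAct p q (Kbar K) x) = ratAct p q (Kbar K) (galP1 σ x) := by
  cases x with
  | none =>
      show galP1 σ (ratAct p q (Kbar K) none) = ratAct p q (Kbar K) none
      simp only [ratAct]
      split_ifs
      · rfl
      · show Option.map σ (some 0) = some 0
        simp
      · show Option.map (⇑σ) (some (algebraMap K (Kbar K) _)) =
          some (algebraMap K (Kbar K) _)
        simp only [Option.map_some]
        rw [AlgEquiv.commutes]
  | some a =>
      have hq : ∀ r : Polynomial K, Polynomial.aeval (σ a) r = σ (Polynomial.aeval a r) :=
        fun r => Polynomial.aeval_algHom_apply σ a r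
      show galP1 σ (ratAct p q (Kbar K) (some a)) = ratAct p q (Kbar K) (some (σ a))
      simp only [ratAct]
      by_cases h : Polynomial.aeval a q = 0
      · rw [if_pos h, if_pos (by rw [hq q, h, map_zero])]
        rfl
      · rw [if_neg h, if_neg (fun hh : Polynomial.aeval (σ a) q = 0 => h (by
          apply σ.injective
          rw [← hq q, hh, map_zero]))]
        show some (σ _) = some _
        rw [map_div₀, hq p, hq q]

variable (rt : P1 (Kbar K))

lemma arbGal_parent {g : ∀ n, Equiv.Perm (preV (ratAct p q (Kbar K)) rt n)}
    (hg : g ∈ arbGal (K := K) galP1 ⊥ (ratAct p q (Kbar K)) rt) (n : ℕ)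
    (β : preV (ratAct p q (Kbar K)) rt (n+1)) :
    preParent (ratAct p q (Kbar K)) rt n (g (n+1) β) =
      g n (preParent (ratAct p q (Kbar K)) rt n β) := by
  obtain ⟨σ, -, hσ⟩ := hg
  apply Subtype.ext
  show ratAct p q (Kbar K) ((g (n+1) β : P1 (Kbar K))) =
    ((g n (preParent (ratAct p q (Kbar K)) rt n β) : preV (ratAct p q (Kbar K)) rt n) : P1 (Kbar K))
  rw [hσ (n+1) β, hσ n (preParent (ratAct p q (Kbar K)) rt n β)]
  show ratAct p q (Kbar K) (galP1 σ (β : P1 (Kbar K))) =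
    galP1 σ ((preParent (ratAct p q (Kbar K)) rt n β : preV (ratAct p q (Kbar K)) rt n) : P1 (Kbar K))
  rw [← galP1_ratAct]
  rfl

end Gal
end AuxAPN
namespace AuxAPN

lemma card_le_one_of_subsingleton (X : Type*) [Subsingleton X] : Nat.card X ≤ 1 := by
  rcases isEmpty_or_nonempty X with h | h
  · simp [Nat.card_of_isEmpty]
  · haveI : Unique X := uniqueOfSubsingleton (Classical.arbitrary X)
    simp [Nat.card_unique]

section Count
variable {K : Type*} [Field K] (p q : Polynomial K) (rt : P1 (Kbar K)) {d : ℕ}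

lemma resCard (hf : IsCoprime p q) (hd : 2 ≤ d)
    (hdeg : max p.natDegree q.natDegree = d) : ∀ n : ℕ,
    Finite ↥(resMapG n '' (arbGal (K := K) galP1 ⊥ (ratAct p q (Kbar K)) rt)) ∧
      Nat.card ↥(resMapG n '' (arbGal (K := K) galP1 ⊥ (ratAct p q (Kbar K)) rt)) ^ (d-1) * d.factorial ≤
        d.factorial ^ Nat.card (preV (ratAct p q (Kbar K)) rt n) := by
  have hFib : ∀ y : P1 (Kbar K), Finite {x : P1 (Kbar K) // (ratAct p q (Kbar K)) x = y} :=
    fun y => fiber_finite hf hd hdeg y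
  have hNeF : ∀ y : P1 (Kbar K), Nonempty {x : P1 (Kbar K) // (ratAct p q (Kbar K)) x = y} :=
    fun y => fiber_nonempty hf hd hdeg y
  have hCardF : ∀ y : P1 (Kbar K), Nat.card {x : P1 (Kbar K) // (ratAct p q (Kbar K)) x = y} ≤ d :=
    fun y => fiber_card_le hf hd hdeg y
  intro n
  induction n with
  | zero =>
      haveI hsub : Subsingleton (preV (ratAct p q (Kbar K)) rt 0) := preV_zero_subsingleton _ _
      haveI hsub1 : ∀ k : Fin 1, Subsingleton (Equiv.Perm (preV (ratAct p q (Kbar K)) rt k.1)) := by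
        intro k
        have hk : k.1 = 0 := by omega
        rw [hk]
        exact ⟨fun σ τ => Equiv.ext fun b => Subsingleton.elim _ _⟩
      haveI hsub2 : Subsingleton (∀ k : Fin 1, Equiv.Perm (preV (ratAct p q (Kbar K)) rt k.1)) :=
        ⟨fun a b => funext fun k => Subsingleton.elim _ _⟩
      haveI : Subsingleton ↥(resMapG 0 '' (arbGal (K := K) galP1 ⊥ (ratAct p q (Kbar K)) rt)) :=
        ⟨fun a b => Subtype.ext (Subsingleton.elim _ _)⟩
      refine ⟨Finite.of_subsingleton, ?_⟩
      haveI := preV_finite (ratAct p q (Kbar K)) rt hFib 0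
      haveI : Nonempty (preV (ratAct p q (Kbar K)) rt 0) := ⟨⟨rt, rfl⟩⟩
      have hN0 : 1 ≤ Nat.card (preV (ratAct p q (Kbar K)) rt 0) := Nat.card_pos
      have h1 := card_le_one_of_subsingleton ↥(resMapG 0 '' (arbGal (K := K) galP1 ⊥ (ratAct p q (Kbar K)) rt))
      calc Nat.card ↥(resMapG 0 '' (arbGal (K := K) galP1 ⊥ (ratAct p q (Kbar K)) rt)) ^ (d-1) * d.factorial
          ≤ 1 ^ (d-1) * d.factorial := Nat.mul_le_mul_right _ (Nat.pow_le_pow_left h1 _)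
        _ = d.factorial := by rw [one_pow, one_mul]
        _ ≤ d.factorial ^ Nat.card (preV (ratAct p q (Kbar K)) rt 0) := Nat.le_self_pow (by omega) _
  | succ n ih =>
      obtain ⟨ihFin, ihCard⟩ := ih
      haveI hVfin : ∀ m, Finite (preV (ratAct p q (Kbar K)) rt m) := preV_finite (ratAct p q (Kbar K)) rt hFib
      haveI : ∀ v : preV (ratAct p q (Kbar K)) rt n, Finite {x : P1 (Kbar K) // (ratAct p q (Kbar K)) x = v.1} :=
        fun v => hFib v.1
      haveI : ∀ v : preV (ratAct p q (Kbar K)) rt n,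
          Finite {β : preV (ratAct p q (Kbar K)) rt (n+1) // preParent (ratAct p q (Kbar K)) rt n β = v} :=
        fun v => Finite.of_equiv _ (fEquiv (ratAct p q (Kbar K)) rt n v).symm
      letI : Fintype (preV (ratAct p q (Kbar K)) rt n) := Fintype.ofFinite _
      letI : Fintype (preV (ratAct p q (Kbar K)) rt (n+1)) := Fintype.ofFinite _
      letI : ∀ v : preV (ratAct p q (Kbar K)) rt n, Fintype {x : P1 (Kbar K) // (ratAct p q (Kbar K)) x = v.1} :=
        fun v => Fintype.ofFinite _
      letI : ∀ v : preV (ratAct p q (Kbar K)) rt n,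
          Fintype {β : preV (ratAct p q (Kbar K)) rt (n+1) // preParent (ratAct p q (Kbar K)) rt n β = v} :=
        fun v => Fintype.ofFinite _
      haveI hFinRn : Finite ↥(resMapG n '' (arbGal (K := K) galP1 ⊥ (ratAct p q (Kbar K)) rt)) := ihFin
      have hFin1 : Finite ↥(resMapG (n+1) '' (arbGal (K := K) galP1 ⊥ (ratAct p q (Kbar K)) rt)) := by
        apply Finite.of_injective
          (f := fun r : ↥(resMapG (n+1) '' (arbGal (K := K) galP1 ⊥ (ratAct p q (Kbar K)) rt)) =>
            ((truncG n r.1, fun β : preV (ratAct p q (Kbar K)) rt (n+1) => r.1 ⟨n+1, by omega⟩ β) :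
              (∀ k : Fin (n+1), Equiv.Perm (preV (ratAct p q (Kbar K)) rt k.1)) ×
                (preV (ratAct p q (Kbar K)) rt (n+1) → preV (ratAct p q (Kbar K)) rt (n+1))))
        intro r r' h
        rw [Prod.mk.injEq] at h
        apply Subtype.ext
        exact res_recover h.1 (fun β => congrFun h.2 β)
      haveI := hFin1
      set E := ∏ v : preV (ratAct p q (Kbar K)) rt n,
        (Nat.card {x : P1 (Kbar K) // (ratAct p q (Kbar K)) x = v.1}).factorial with hE
      have hstep : Nat.card ↥(resMapG (n+1) '' (arbGal (K := K) galP1 ⊥ (ratAct p q (Kbar K)) rt)) ≤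
          E * Nat.card ↥(resMapG n '' (arbGal (K := K) galP1 ⊥ (ratAct p q (Kbar K)) rt)) := by
        apply card_le_of_fiber_le
          (f := fun r : ↥(resMapG (n+1) '' (arbGal (K := K) galP1 ⊥ (ratAct p q (Kbar K)) rt)) =>
            (⟨truncG n r.1, truncG_mem r.2⟩ : ↥(resMapG n '' (arbGal (K := K) galP1 ⊥ (ratAct p q (Kbar K)) rt))))
        intro b
        have key : ∀ (r : ∀ k : Fin (n+2), Equiv.Perm (preV (ratAct p q (Kbar K)) rt k.1)),
            r ∈ resMapG (n+1) '' (arbGal (K := K) galP1 ⊥ (ratAct p q (Kbar K)) rt) → truncG n r = b.1 →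
            ∀ (β : preV (ratAct p q (Kbar K)) rt (n+1)),
              preParent (ratAct p q (Kbar K)) rt n (r ⟨n+1, by omega⟩ β) =
                b.1 ⟨n, by omega⟩ (preParent (ratAct p q (Kbar K)) rt n β) := by
          rintro r ⟨g, hgG, rfl⟩ hrb β
          show preParent (ratAct p q (Kbar K)) rt n (g (n+1) β) = _
          rw [arbGal_parent p q rt hgG n β]
          have h3 : (g n : Equiv.Perm (preV (ratAct p q (Kbar K)) rt n)) = b.1 ⟨n, by omega⟩ :=
            congrFun hrb ⟨n, by omega⟩
          rw [h3]
        letI : ∀ v : preV (ratAct p q (Kbar K)) rt n,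
            Fintype ({β : preV (ratAct p q (Kbar K)) rt (n+1) // preParent (ratAct p q (Kbar K)) rt n β = v} ↪
              {β : preV (ratAct p q (Kbar K)) rt (n+1) // preParent (ratAct p q (Kbar K)) rt n β = b.1 ⟨n, by omega⟩ v}) :=
          fun v => Fintype.ofFinite _
        have hJ : ∃ J : {a : ↥(resMapG (n+1) '' (arbGal (K := K) galP1 ⊥ (ratAct p q (Kbar K)) rt)) //
              (⟨truncG n a.1, truncG_mem a.2⟩ : ↥(resMapG n '' (arbGal (K := K) galP1 ⊥ (ratAct p q (Kbar K)) rt))) = b} →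
            (∀ v : preV (ratAct p q (Kbar K)) rt n,
              ({β : preV (ratAct p q (Kbar K)) rt (n+1) // preParent (ratAct p q (Kbar K)) rt n β = v} ↪
               {β : preV (ratAct p q (Kbar K)) rt (n+1) // preParent (ratAct p q (Kbar K)) rt n β = b.1 ⟨n, by omega⟩ v})),
            Function.Injective J := by
          refine ⟨fun a => fun v =>
            ⟨fun β => ⟨a.1.1 ⟨n+1, by omega⟩ β.1,
              by
                have hk := key a.1.1 a.1.2 (Subtype.ext_iff.mp a.2) β.1
                rw [β.2] at hk
                exact hk⟩,
             by
                intro β β' hββ'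
                apply Subtype.ext
                apply (a.1.1 ⟨n+1, by omega⟩).injective
                exact congrArg Subtype.val hββ'⟩, ?_⟩
          intro a a' h
          apply Subtype.ext
          apply Subtype.ext
          apply res_recover
            ((Subtype.ext_iff.mp a.2).trans (Subtype.ext_iff.mp a'.2).symm)
          intro β
          have h4 := congrFun h (preParent (ratAct p q (Kbar K)) rt n β)
          exact congrArg (fun e => ((e ⟨β, rfl⟩ :
            {β' : preV (ratAct p q (Kbar K)) rt (n+1) //
              preParent (ratAct p q (Kbar K)) rt n β' = b.1 ⟨n, by omega⟩ (preParent (ratAct p q (Kbar K)) rt n β)}) : 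
                preV (ratAct p q (Kbar K)) rt (n+1))) h4
        obtain ⟨J, hJinj⟩ := hJ
        calc Nat.card {a : ↥(resMapG (n+1) '' (arbGal (K := K) galP1 ⊥ (ratAct p q (Kbar K)) rt)) //
              (⟨truncG n a.1, truncG_mem a.2⟩ : ↥(resMapG n '' (arbGal (K := K) galP1 ⊥ (ratAct p q (Kbar K)) rt))) = b}
            ≤ Nat.card (∀ v : preV (ratAct p q (Kbar K)) rt n,
              ({β : preV (ratAct p q (Kbar K)) rt (n+1) // preParent (ratAct p q (Kbar K)) rt n β = v} ↪
               {β : preV (ratAct p q (Kbar K)) rt (n+1) // preParent (ratAct p q (Kbar K)) rt n β = b.1 ⟨n, by omega⟩ v})) :=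
              Nat.card_le_card_of_injective J hJinj
          _ = ∏ v : preV (ratAct p q (Kbar K)) rt n, Nat.card
              ({β : preV (ratAct p q (Kbar K)) rt (n+1) // preParent (ratAct p q (Kbar K)) rt n β = v} ↪
               {β : preV (ratAct p q (Kbar K)) rt (n+1) // preParent (ratAct p q (Kbar K)) rt n β = b.1 ⟨n, by omega⟩ v}) :=
              Nat.card_pi
          _ ≤ ∏ v : preV (ratAct p q (Kbar K)) rt n,
              (Nat.card {β : preV (ratAct p q (Kbar K)) rt (n+1) //
                preParent (ratAct p q (Kbar K)) rt n β = b.1 ⟨n, by omega⟩ v}).factorial := by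
              apply Finset.prod_le_prod'
              intro v _
              simp only [Nat.card_eq_fintype_card]
              rw [Fintype.card_embedding_eq]
              exact descFactorial_le_factorial _ _
          _ = ∏ v : preV (ratAct p q (Kbar K)) rt n,
              (Nat.card {β : preV (ratAct p q (Kbar K)) rt (n+1) //
                preParent (ratAct p q (Kbar K)) rt n β = v}).factorial :=
              Equiv.prod_comp (b.1 ⟨n, by omega⟩)
                (fun v => (Nat.card {β : preV (ratAct p q (Kbar K)) rt (n+1) //
                  preParent (ratAct p q (Kbar K)) rt n β = v}).factorial)
          _ = E := by
              rw [hE]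
              apply Finset.prod_congr rfl
              intro v _
              rw [Nat.card_congr (fEquiv (ratAct p q (Kbar K)) rt n v)]
      have hsum : Nat.card (preV (ratAct p q (Kbar K)) rt (n+1)) =
          ∑ v : preV (ratAct p q (Kbar K)) rt n, Nat.card {x : P1 (Kbar K) // (ratAct p q (Kbar K)) x = v.1} :=
        card_level_succ (ratAct p q (Kbar K)) rt n
      have hEb : E ^ (d-1) * d.factorial ^ Nat.card (preV (ratAct p q (Kbar K)) rt n) ≤
          d.factorial ^ Nat.card (preV (ratAct p q (Kbar K)) rt (n+1)) := by
        rw [hsum, ← Finset.prod_pow_eq_pow_sum, hE, ← Finset.prod_pow]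
        have hNn : Nat.card (preV (ratAct p q (Kbar K)) rt n) = Fintype.card (preV (ratAct p q (Kbar K)) rt n) :=
          Nat.card_eq_fintype_card
        rw [hNn, ← Finset.card_univ, ← Finset.prod_const, ← Finset.prod_mul_distrib]
        apply Finset.prod_le_prod'
        intro v _
        refine convex_fact ?_ (hCardF v.1)
        haveI : Nonempty {x : P1 (Kbar K) // (ratAct p q (Kbar K)) x = v.1} := hNeF v.1
        exact Nat.card_pos
      refine ⟨hFin1, ?_⟩
      calc Nat.card ↥(resMapG (n+1) '' (arbGal (K := K) galP1 ⊥ (ratAct p q (Kbar K)) rt)) ^ (d-1) * d.factorial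
          ≤ (E * Nat.card ↥(resMapG n '' (arbGal (K := K) galP1 ⊥ (ratAct p q (Kbar K)) rt))) ^ (d-1) * d.factorial :=
            Nat.mul_le_mul_right _ (Nat.pow_le_pow_left hstep _)
        _ = E ^ (d-1) * (Nat.card ↥(resMapG n '' (arbGal (K := K) galP1 ⊥ (ratAct p q (Kbar K)) rt)) ^ (d-1) * d.factorial) := by
            rw [mul_pow]; ring
        _ ≤ E ^ (d-1) * d.factorial ^ Nat.card (preV (ratAct p q (Kbar K)) rt n) :=
            Nat.mul_le_mul_left _ ihCard
        _ ≤ d.factorial ^ Nat.card (preV (ratAct p q (Kbar K)) rt (n+1)) := hEb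

end Count
end AuxAPN
namespace AuxAPN

section Cover
variable {K : Type*} [Field K] (p q : Polynomial K) (rt : P1 (Kbar K)) {d : ℕ}

lemma coverNum_le (hf : IsCoprime p q) (hd : 2 ≤ d)
    (hdeg : max p.natDegree q.natDegree = d) (n : ℕ) :
    coverNum d (arbGal (K := K) galP1 ⊥ (ratAct p q (Kbar K)) rt) n ≤ Nat.card ↥(resMapG n '' (arbGal (K := K) galP1 ⊥ (ratAct p q (Kbar K)) rt)) := by
  have hFinR := (resCard p q rt hf hd hdeg n).1
  letI := Fintype.ofFinite ↥(resMapG n '' (arbGal (K := K) galP1 ⊥ (ratAct p q (Kbar K)) rt))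
  have hsec : ∀ r : ↥(resMapG n '' (arbGal (K := K) galP1 ⊥ (ratAct p q (Kbar K)) rt)), ∃ σ, σ ∈ (arbGal (K := K) galP1 ⊥ (ratAct p q (Kbar K)) rt) ∧ resMapG n σ = r.1 :=
    fun r => r.2
  choose F hF1 hF2 using hsec
  set s : Finset (∀ k, Equiv.Perm (preV (ratAct p q (Kbar K)) rt k)) :=
    Finset.image F Finset.univ with hs
  have hcov : (arbGal (K := K) galP1 ⊥ (ratAct p q (Kbar K)) rt) ⊆ ⋃ σ ∈ s, {τ | treeDist d σ τ ≤ treeScale d n} := by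
    intro τ hτ
    have hmem : resMapG n τ ∈ resMapG n '' (arbGal (K := K) galP1 ⊥ (ratAct p q (Kbar K)) rt) := ⟨τ, hτ, rfl⟩
    have hσs : F ⟨resMapG n τ, hmem⟩ ∈ s := Finset.mem_image_of_mem F (Finset.mem_univ _)
    refine Set.mem_biUnion hσs ?_
    show treeDist d (F ⟨resMapG n τ, hmem⟩) τ ≤ treeScale d n
    apply treeDist_le
    intro k hk
    exact congrFun (hF2 ⟨resMapG n τ, hmem⟩) (⟨k, by omega⟩ : Fin (n+1))
  have h1 : coverNum d (arbGal (K := K) galP1 ⊥ (ratAct p q (Kbar K)) rt) n ≤ s.card := Nat.sInf_le ⟨s, rfl, hcov⟩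
  have h2 : s.card ≤ Fintype.card ↥(resMapG n '' (arbGal (K := K) galP1 ⊥ (ratAct p q (Kbar K)) rt)) :=
    le_trans Finset.card_image_le (le_of_eq (Finset.card_univ))
  rw [Nat.card_eq_fintype_card]
  omega

end Cover
end AuxAPN
theorem arboreal_postcritical_not_large {K : Type*} [Field K] [NumberField K] {d : ℕ}
    (hd : 2 ≤ d) (p q : Polynomial K) (hf : IsCoprime p q)
    (hdeg : max p.natDegree q.natDegree = d) (α : P1 K) (m : ℕ) (hm : 1 ≤ m)
    (hcrit : ∃ γ : P1 (Kbar K), 2 ≤ multAt p q (Kbar K) d γ ∧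
      (ratAct p q (Kbar K))^[m] γ = P1K α) :
    dimUpper d (arbGal (K := K) galP1 ⊥ (ratAct p q (Kbar K)) (P1K α)) ≤
        1 - ((d : ℝ) ^ m)⁻¹ ∧
      dimUpper d (arbGal (K := K) galP1 ⊥ (ratAct p q (Kbar K)) (P1K α)) < 1 := by
  obtain ⟨γ, hγmult, hγm⟩ := hcrit
  obtain ⟨m', rfl⟩ : ∃ m'', m = m'' + 1 := ⟨m - 1, by omega⟩
  have hmain : dimUpper d (arbGal (K := K) galP1 ⊥ (ratAct p q (Kbar K)) (P1K α)) ≤ 1 - ((d : ℝ) ^ (m' + 1))⁻¹ := by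
    open AuxAPN in
    have hFib : ∀ y : P1 (Kbar K), Finite {x : P1 (Kbar K) // (ratAct p q (Kbar K)) x = y} :=
      fun y => fiber_finite hf hd hdeg y
    have hNeF : ∀ y : P1 (Kbar K), Nonempty {x : P1 (Kbar K) // (ratAct p q (Kbar K)) x = y} :=
      fun y => fiber_nonempty hf hd hdeg y
    have hCardF : ∀ y : P1 (Kbar K), Nat.card {x : P1 (Kbar K) // (ratAct p q (Kbar K)) x = y} ≤ d :=
      fun y => fiber_card_le hf hd hdeg y
    -- counting bound for the covering numbers
    have hCn : ∀ n : ℕ, coverNum d (arbGal (K := K) galP1 ⊥ (ratAct p q (Kbar K)) (P1K α)) n ^ (d-1) * d.factorial ≤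
        d.factorial ^ Nat.card (preV (ratAct p q (Kbar K)) (P1K α) n) := by
      intro n
      refine le_trans (Nat.mul_le_mul_right _ (Nat.pow_le_pow_left
        (coverNum_le p q (P1K α) hf hd hdeg n) _)) ?_
      exact (resCard p q (P1K α) hf hd hdeg n).2
    -- level cardinalities
    have hNle : ∀ k : ℕ, Nat.card (preV (ratAct p q (Kbar K)) (P1K α) k) ≤ d ^ k := by
      intro k
      induction k with
      | zero =>
          haveI := preV_zero_subsingleton (ratAct p q (Kbar K)) (P1K α)
          simpa using card_le_one_of_subsingleton (preV (ratAct p q (Kbar K)) (P1K α) 0)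
      | succ k ihk =>
          calc Nat.card (preV (ratAct p q (Kbar K)) (P1K α) (k+1)) ≤
              d * Nat.card (preV (ratAct p q (Kbar K)) (P1K α) k) :=
                card_succ_le (ratAct p q (Kbar K)) (P1K α) hFib hCardF k
            _ ≤ d * d ^ k := Nat.mul_le_mul_left d ihk
            _ = d ^ (k+1) := by ring
    -- the critical vertex at level m'
    have hv0mem : ((ratAct p q (Kbar K)))^[m'] ((ratAct p q (Kbar K)) γ) = P1K α := by
      rw [← Function.iterate_succ_apply (ratAct p q (Kbar K)) m' γ]
      exact hγm
    have hcritcard : Nat.card {x : P1 (Kbar K) // (ratAct p q (Kbar K)) x = (ratAct p q (Kbar K)) γ} + 1 ≤ d :=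
      fiber_card_crit hf hd hdeg hγmult
    have hNm : Nat.card (preV (ratAct p q (Kbar K)) (P1K α) (m' + 1)) + 1 ≤ d ^ (m' + 1) := by
      have h1 := card_succ_crit (ratAct p q (Kbar K)) (P1K α) hFib hCardF m'
        ⟨(ratAct p q (Kbar K)) γ, hv0mem⟩ hcritcard
      calc Nat.card (preV (ratAct p q (Kbar K)) (P1K α) (m' + 1)) + 1
          ≤ d * Nat.card (preV (ratAct p q (Kbar K)) (P1K α) m') := h1
        _ ≤ d * d ^ m' := Nat.mul_le_mul_left d (hNle m')
        _ = d ^ (m' + 1) := by ring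
    have hNn : ∀ j : ℕ, Nat.card (preV (ratAct p q (Kbar K)) (P1K α) (m' + 1 + j)) + d ^ j ≤
        d ^ (m' + 1 + j) := by
      intro j
      induction j with
      | zero => simpa using hNm
      | succ j ihj =>
          have h1 : m' + 1 + (j + 1) = (m' + 1 + j) + 1 := by ring
          rw [h1]
          calc Nat.card (preV (ratAct p q (Kbar K)) (P1K α) ((m' + 1 + j) + 1)) + d ^ (j+1)
              ≤ d * Nat.card (preV (ratAct p q (Kbar K)) (P1K α) (m' + 1 + j)) + d * d ^ j := by
                have := card_succ_le (ratAct p q (Kbar K)) (P1K α) hFib hCardF (m' + 1 + j)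
                have h2 : d ^ (j+1) = d * d ^ j := by ring
                omega
            _ = d * (Nat.card (preV (ratAct p q (Kbar K)) (P1K α) (m' + 1 + j)) + d ^ j) := by ring
            _ ≤ d * d ^ (m' + 1 + j) := Nat.mul_le_mul_left d ihj
            _ = d ^ ((m' + 1 + j) + 1) := by ring
    -- analytic part
    have hdR : (2:ℝ) ≤ (d:ℝ) := by exact_mod_cast hd
    have hfac2 : (2:ℕ) ≤ d.factorial := by
      calc (2:ℕ) = Nat.factorial 2 := rfl
        _ ≤ d.factorial := Nat.factorial_le hd
    have hlf : 0 < Real.log (d.factorial : ℝ) :=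
      Real.log_pos (by exact_mod_cast Nat.lt_of_lt_of_le Nat.one_lt_two hfac2)
    have hBnn : 0 ≤ 1 - ((d : ℝ) ^ (m' + 1))⁻¹ := by
      have h1 : (1:ℝ) ≤ (d:ℝ) ^ (m' + 1) := one_le_pow₀ (by linarith)
      have h2 : ((d : ℝ) ^ (m' + 1))⁻¹ ≤ 1 := inv_le_one_of_one_le₀ h1
      linarith
    have hu0 : ∀ n : ℕ, 0 ≤ Real.log (coverNum d (arbGal (K := K) galP1 ⊥ (ratAct p q (Kbar K)) (P1K α)) n : ℝ) /
        Real.log (1 / treeScale d n) := by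
      intro n
      apply div_nonneg (Real.log_natCast_nonneg _)
      apply Real.log_nonneg
      rw [one_div]
      have h0 := treeScale_pos d n
      have h1 := treeScale_le_one d n
      have h2 : 0 ≤ (1 - treeScale d n) * (treeScale d n)⁻¹ :=
        mul_nonneg (by linarith) (inv_pos.mpr h0).le
      have h3 : treeScale d n * (treeScale d n)⁻¹ = 1 := mul_inv_cancel₀ h0.ne'
      nlinarith [h2, h3]
    have hD : ∀ n : ℕ, Real.log (1 / treeScale d n) =
        (scaleExp d n : ℝ) * Real.log (d.factorial : ℝ) := by
      intro n
      rw [treeScale, one_div, inv_inv, Real.log_pow]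
    have hse : ∀ n : ℕ, (scaleExp d n : ℝ) = ∑ i ∈ Finset.range n, (d:ℝ) ^ i := by
      intro n
      rw [scaleExp]
      push_cast
      rfl
    have hu : ∀ n : ℕ, m' + 1 ≤ n → Real.log (coverNum d (arbGal (K := K) galP1 ⊥ (ratAct p q (Kbar K)) (P1K α)) n : ℝ) /
        Real.log (1 / treeScale d n) ≤ 1 - ((d : ℝ) ^ (m' + 1))⁻¹ := by
      intro n hn
      by_cases hC0 : coverNum d (arbGal (K := K) galP1 ⊥ (ratAct p q (Kbar K)) (P1K α)) n = 0
      · rw [hC0]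
        simpa using hBnn
      · have hC1 : 1 ≤ coverNum d (arbGal (K := K) galP1 ⊥ (ratAct p q (Kbar K)) (P1K α)) n := Nat.one_le_iff_ne_zero.mpr hC0
        have hsc1 : 1 ≤ scaleExp d n := by
          rw [scaleExp]
          calc 1 = d ^ 0 := (pow_zero d).symm
            _ ≤ ∑ i ∈ Finset.range n, d ^ i :=
              Finset.single_le_sum (fun i _ => Nat.zero_le _)
                (Finset.mem_range.mpr (by omega))
        have hDpos : 0 < Real.log (1 / treeScale d n) := by
          rw [hD n]
          apply mul_pos _ hlf
          exact_mod_cast hsc1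
        -- key cast inequality
        set N := Nat.card (preV (ratAct p q (Kbar K)) (P1K α) n) with hN
        have hcastineq : ((coverNum d (arbGal (K := K) galP1 ⊥ (ratAct p q (Kbar K)) (P1K α)) n : ℝ))^(d-1) * (d.factorial:ℝ) ≤
            (d.factorial:ℝ) ^ N := by exact_mod_cast hCn n
        have hlog := Real.log_le_log (by positivity) hcastineq
        rw [Real.log_mul (by positivity) (by positivity), Real.log_pow,
          Real.log_pow] at hlog
        have hd1 : (0:ℝ) < (d:ℝ) - 1 := by linarith
        have hlogC : ((d:ℝ)-1) * Real.log (coverNum d (arbGal (K := K) galP1 ⊥ (ratAct p q (Kbar K)) (P1K α)) n : ℝ) ≤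
            ((N:ℝ) - 1) * Real.log (d.factorial : ℝ) := by
          have hcast2 : ((d - 1 : ℕ) : ℝ) = (d:ℝ) - 1 := by
            push_cast [Nat.cast_sub (by omega : 1 ≤ d)]
            ring
          rw [hcast2] at hlog
          nlinarith [hlog]
        -- key numeric bound
        obtain ⟨j, rfl⟩ : ∃ j, n = (m' + 1) + j := ⟨n - (m' + 1), by omega⟩
        have hc : (N:ℝ) + (d:ℝ)^j ≤ (d:ℝ)^(m' + 1 + j) := by
          rw [hN]
          exact_mod_cast hNn j
        have hMD : (d:ℝ)^(m' + 1 + j) = (d:ℝ)^(m' + 1) * (d:ℝ)^j := by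
          rw [← pow_add]
        have hMpos : (0:ℝ) < (d:ℝ)^(m' + 1) := by positivity
        have e1 : ((d:ℝ)^(m' + 1))⁻¹ * (d:ℝ)^(m' + 1 + j) = (d:ℝ)^j := by
          rw [hMD, ← mul_assoc, inv_mul_cancel₀ hMpos.ne', one_mul]
        have hkey : (N:ℝ) - 1 ≤ (1 - ((d:ℝ)^(m' + 1))⁻¹) * ((d:ℝ)^(m' + 1 + j) - 1) := by
          have hexp : (1 - ((d:ℝ)^(m' + 1))⁻¹) * ((d:ℝ)^(m' + 1 + j) - 1) =
              (d:ℝ)^(m' + 1 + j) - 1 - ((d:ℝ)^(m' + 1))⁻¹ * (d:ℝ)^(m' + 1 + j)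
                + ((d:ℝ)^(m' + 1))⁻¹ := by ring
          rw [hexp, e1]
          have hinvnn : (0:ℝ) ≤ ((d:ℝ)^(m' + 1))⁻¹ := by positivity
          linarith
        have hgeom : ((d:ℝ) - 1) * (scaleExp d (m' + 1 + j) : ℝ) =
            (d:ℝ)^(m' + 1 + j) - 1 := by
          rw [hse, mul_comm]
          exact geom_sum_mul (d:ℝ) (m' + 1 + j)
        rw [div_le_iff₀ hDpos, hD]
        rw [← mul_le_mul_iff_right₀ hd1]
        calc ((d:ℝ)-1) * Real.log (coverNum d (arbGal (K := K) galP1 ⊥ (ratAct p q (Kbar K)) (P1K α)) (m' + 1 + j) : ℝ)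
            ≤ ((N:ℝ) - 1) * Real.log (d.factorial : ℝ) := hlogC
          _ ≤ ((1 - ((d:ℝ)^(m' + 1))⁻¹) * ((d:ℝ)^(m' + 1 + j) - 1)) *
              Real.log (d.factorial : ℝ) :=
              mul_le_mul_of_nonneg_right hkey hlf.le
          _ = ((d:ℝ)-1) * ((1 - ((d:ℝ)^(m' + 1))⁻¹) *
              ((scaleExp d (m' + 1 + j) : ℝ) * Real.log (d.factorial : ℝ))) := by
              rw [← hgeom]; ring
    -- limsup
    have hrfl : dimUpper d (arbGal (K := K) galP1 ⊥ (ratAct p q (Kbar K)) (P1K α)) = Filter.limsup (fun n : ℕ =>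
        Real.log (coverNum d (arbGal (K := K) galP1 ⊥ (ratAct p q (Kbar K)) (P1K α)) n : ℝ) / Real.log (1 / treeScale d n))
        Filter.atTop := rfl
    rw [hrfl]
    apply Filter.limsup_le_of_le
    · exact Filter.isCoboundedUnder_le_of_le Filter.atTop (x := 0) hu0
    · exact Filter.eventually_atTop.mpr ⟨m' + 1, hu⟩
  constructor
  · exact hmain
  · have h1 : (0:ℝ) < ((d : ℝ) ^ (m' + 1))⁻¹ := by
      have : (0:ℝ) < (d:ℝ) := by
        have : (2:ℝ) ≤ (d:ℝ) := by exact_mod_cast hd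
        linarith
      positivity
    linarith [hmain]
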